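/- Let ū(m) = E_{S ⊆ N, |S|=m}[u(S)] be the average of u over all subsets of size m, and let A(k) = ∑_{T ⊆ N, |T|=k} I(T). Then for every 0 ≤ m ≤ n, ū(m) = ∑_{k=1}^{m} (C(m,k)/C(n,k)) · A(k). -/

import Mathlib

open Finset

theorem avg_output_decomposition {N : Type*} [Fintype N] [DecidableEq N]
    (u I : Finset N → ℝ) (hu : u ∅ = 0)
    (hI : ∀ S : Finset N, I S = ∑ T ∈ S.powerset, (-1 : ℝ) ^ (S.card - T.card) * u T)
    (A : ℕ → ℝ)
    (hA : ∀ k, A k = ∑ T ∈ Finset.powersetCard k (Finset.univ : Finset N), I T)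
    (ubar : ℕ → ℝ)
    (hubar : ∀ m, ubar m = ((Nat.choose (Fintype.card N) m : ℝ))⁻¹ *
        ∑ S ∈ Finset.powersetCard m (Finset.univ : Finset N), u S) :
    ∀ m, m ≤ Fintype.card N →
      ubar m = ∑ k ∈ Finset.Icc 1 m,
        ((Nat.choose m k : ℝ) / (Nat.choose (Fintype.card N) k : ℝ)) * A k := by
  intro m hm
  set n := Fintype.card N with hn
  -- alternating sum over a powerset, real version
  have halt : ∀ x : Finset N, (∑ W ∈ x.powerset, (-1 : ℝ) ^ W.card)
      = if x = ∅ then 1 else 0 := by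
    intro x
    have h := Finset.sum_powerset_neg_one_pow_card (x := x)
    calc (∑ W ∈ x.powerset, (-1 : ℝ) ^ W.card)
        = ((∑ W ∈ x.powerset, (-1 : ℤ) ^ W.card : ℤ) : ℝ) := by push_cast; rfl
      _ = _ := by rw [h]; split <;> norm_num
  -- Möbius inversion: u S = ∑_{T ⊆ S} I T
  have hinv : ∀ S : Finset N, ∑ T ∈ S.powerset, I T = u S := by
    intro S
    have h1 : ∑ T ∈ S.powerset, I T
        = ∑ T ∈ S.powerset, ∑ R ∈ S.powerset,
            (if R ⊆ T then (-1 : ℝ) ^ (T.card - R.card) * u R else 0) := by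
      refine Finset.sum_congr rfl fun T hT => ?_
      rw [mem_powerset] at hT
      rw [hI T, ← Finset.sum_filter]
      refine Finset.sum_congr ?_ (fun _ _ => rfl)
      ext R
      simp only [mem_powerset, mem_filter]
      exact ⟨fun h => ⟨h.trans hT, h⟩, fun h => h.2⟩
    rw [h1, Finset.sum_comm]
    have h2 : ∀ R ∈ S.powerset,
        (∑ T ∈ S.powerset, if R ⊆ T then (-1 : ℝ) ^ (T.card - R.card) * u R else 0)
        = u R * (if S \ R = ∅ then 1 else 0) := by
      intro R hR
      rw [mem_powerset] at hR
      rw [Finset.sum_ite, Finset.sum_const_zero, add_zero]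
      have h3 : ∑ T ∈ S.powerset.filter (fun T => R ⊆ T),
            (-1 : ℝ) ^ (T.card - R.card) * u R
          = ∑ W ∈ (S \ R).powerset, (-1 : ℝ) ^ W.card * u R := by
        refine Finset.sum_nbij' (fun T => T \ R) (fun W => R ∪ W) ?_ ?_ ?_ ?_ ?_
        · intro T hT
          simp only [mem_filter, mem_powerset] at hT ⊢
          exact sdiff_subset_sdiff hT.1 le_rfl
        · intro W hW
          simp only [mem_powerset] at hW
          simp only [mem_filter, mem_powerset]
          constructor
          · exact union_subset hR (hW.trans (sdiff_subset))
          · exact subset_union_left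
        · intro T hT
          simp only [mem_filter, mem_powerset] at hT
          show R ∪ T \ R = T
          exact union_sdiff_of_subset hT.2
        · intro W hW
          simp only [mem_powerset] at hW
          have hd : Disjoint R W := disjoint_sdiff.mono_right hW
          show (R ∪ W) \ R = W
          rw [union_sdiff_cancel_left hd]
        · intro T hT
          simp only [mem_filter, mem_powerset] at hT
          rw [card_sdiff_of_subset hT.2]
      rw [h3, ← Finset.sum_mul, mul_comm, ← halt (S \ R)]
    rw [Finset.sum_congr rfl h2]
    have h4 : ∀ R ∈ S.powerset,
        u R * (if S \ R = ∅ then 1 else 0) = if R = S then u R else 0 := by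
      intro R hR
      rw [mem_powerset] at hR
      by_cases h : R = S
      · simp [h]
      · have : S \ R ≠ ∅ := by
          rw [Ne, sdiff_eq_empty_iff_subset]
          exact fun hSR => h (subset_antisymm hR hSR)
        simp [h, this]
    rw [Finset.sum_congr rfl h4, Finset.sum_ite_eq' _ S, if_pos (mem_powerset_self S)]
  -- counting supersets of a fixed T of size m
  have hcount : ∀ T : Finset N, T.card ≤ m →
      ((Finset.powersetCard m (Finset.univ : Finset N)).filter (fun S => T ⊆ S)).card
        = Nat.choose (n - T.card) (m - T.card) := by
    intro T hT
    have : ((Finset.powersetCard m (Finset.univ : Finset N)).filter (fun S => T ⊆ S)).card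
        = (Finset.powersetCard (m - T.card) ((Finset.univ : Finset N) \ T)).card := by
      refine Finset.card_nbij' (fun S => S \ T) (fun W => W ∪ T) ?_ ?_ ?_ ?_
      · intro S hS
        simp only [mem_coe, mem_filter, mem_powersetCard] at hS ⊢
        refine ⟨sdiff_subset_sdiff (subset_univ S) le_rfl, ?_⟩
        rw [card_sdiff_of_subset hS.2, hS.1.2]
      · intro W hW
        simp only [mem_coe, mem_powersetCard] at hW
        have hd : Disjoint W T := sdiff_disjoint.mono_left hW.1
        simp only [mem_coe, mem_filter, mem_powersetCard]
        refine ⟨⟨subset_univ _, ?_⟩, subset_union_right⟩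
        rw [card_union_of_disjoint hd, hW.2, Nat.sub_add_cancel hT]
      · intro S hS
        simp only [mem_coe, mem_filter, mem_powersetCard] at hS
        show S \ T ∪ T = S
        rw [sdiff_union_self_eq_union, union_eq_left.mpr hS.2]
      · intro W hW
        simp only [mem_coe, mem_powersetCard] at hW
        have hd : Disjoint W T := sdiff_disjoint.mono_left hW.1
        show (W ∪ T) \ T = W
        rw [union_sdiff_cancel_right hd]
    rw [this, Finset.card_powersetCard, card_sdiff_of_subset (subset_univ T), card_univ]
  have hcount0 : ∀ T : Finset N, m < T.card →
      ((Finset.powersetCard m (Finset.univ : Finset N)).filter (fun S => T ⊆ S)) = ∅ := by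
    intro T hT
    rw [Finset.filter_eq_empty_iff]
    intro S hS hTS
    simp only [mem_powersetCard] at hS
    have h := card_le_card hTS
    omega
  -- main computation
  have hA0 : A 0 = 0 := by
    rw [hA, Finset.powersetCard_zero, Finset.sum_singleton, hI, Finset.powerset_empty,
      Finset.sum_singleton, hu, mul_zero]
  have key : ∑ S ∈ Finset.powersetCard m (Finset.univ : Finset N), u S
      = ∑ k ∈ Finset.Icc 1 m, (Nat.choose (n - k) (m - k) : ℝ) * A k := by
    have e1 : ∑ S ∈ Finset.powersetCard m (Finset.univ : Finset N), u S
        = ∑ S ∈ Finset.powersetCard m (Finset.univ : Finset N),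
            ∑ T ∈ (Finset.univ : Finset N).powerset, (if T ⊆ S then I T else 0) := by
      refine Finset.sum_congr rfl fun S hS => ?_
      rw [← hinv S, ← Finset.sum_filter]
      refine Finset.sum_congr ?_ (fun _ _ => rfl)
      ext T
      simp [mem_powerset]
    rw [e1, Finset.sum_comm]
    have e2 : ∀ T ∈ (Finset.univ : Finset N).powerset,
        (∑ S ∈ Finset.powersetCard m (Finset.univ : Finset N), if T ⊆ S then I T else 0)
        = (((Finset.powersetCard m (Finset.univ : Finset N)).filter
            (fun S => T ⊆ S)).card : ℝ) * I T := by
      intro T _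
      rw [Finset.sum_ite, Finset.sum_const_zero, add_zero, Finset.sum_const,
        nsmul_eq_mul]
    rw [Finset.sum_congr rfl e2]
    rw [show ∑ T ∈ (Finset.univ : Finset N).powerset,
          (((Finset.powersetCard m (Finset.univ : Finset N)).filter (fun S => T ⊆ S)).card : ℝ) * I T
        = ∑ k ∈ Finset.range (card (Finset.univ : Finset N) + 1), ∑ T ∈ Finset.powersetCard k (Finset.univ : Finset N),
          (((Finset.powersetCard m (Finset.univ : Finset N)).filter (fun S => T ⊆ S)).card : ℝ) * I T by
      rw [Finset.powerset_card_disjiUnion]; exact Finset.sum_disjiUnion _ _ _]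
    have e3 : ∀ k ∈ Finset.range (card (Finset.univ : Finset N) + 1),
        (∑ T ∈ Finset.powersetCard k (Finset.univ : Finset N),
          (((Finset.powersetCard m (Finset.univ : Finset N)).filter
            (fun S => T ⊆ S)).card : ℝ) * I T)
        = if k ≤ m then (Nat.choose (n - k) (m - k) : ℝ) * A k else 0 := by
      intro k _
      by_cases hk : k ≤ m
      · rw [if_pos hk, hA, Finset.mul_sum]
        refine Finset.sum_congr rfl fun T hT => ?_
        rw [mem_powersetCard] at hT
        rw [hcount T (by rw [hT.2]; exact hk), hT.2]
      · rw [if_neg hk]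
        refine Finset.sum_eq_zero fun T hT => ?_
        rw [mem_powersetCard] at hT
        rw [hcount0 T (by rw [hT.2]; omega)]
        simp
    rw [Finset.sum_congr rfl e3, Finset.sum_ite, Finset.sum_const_zero, add_zero]
    have e4 : (Finset.range (card (Finset.univ : Finset N) + 1)).filter (fun k => k ≤ m)
        = Finset.range (m + 1) := by
      ext k
      simp only [mem_filter, mem_range, card_univ, ← hn]
      omega
    rw [e4]
    have e5 : Finset.range (m + 1) = insert 0 (Finset.Icc 1 m) := by
      ext k; simp only [mem_range, mem_insert, mem_Icc]; omega
    rw [e5, Finset.sum_insert (by simp), hA0, mul_zero, zero_add]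
  rw [hubar, key, Finset.mul_sum]
  refine Finset.sum_congr rfl fun k hk => ?_
  rw [mem_Icc] at hk
  rw [← mul_assoc]
  congr 1
  have h1 : (Nat.choose n m : ℝ) ≠ 0 := Nat.cast_ne_zero.mpr (Nat.choose_pos hm).ne'
  have h2 : (Nat.choose n k : ℝ) ≠ 0 :=
    Nat.cast_ne_zero.mpr (Nat.choose_pos (hk.2.trans hm)).ne'
  have hmul : Nat.choose n m * Nat.choose m k
      = Nat.choose n k * Nat.choose (n - k) (m - k) := Nat.choose_mul hk.2
  rw [inv_mul_eq_div, div_eq_div_iff h1 h2]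
  have : (Nat.choose n m : ℝ) * Nat.choose m k
      = Nat.choose n k * Nat.choose (n - k) (m - k) := by exact_mod_cast hmul
  linarith [this]
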